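/- In the exterior algebra Λ[c₁†,…,c₃†] with Q = c₁ c₂† c₃, the homology of Q (i.e., ker Q / im Q) has dimension 6, with graded dimensions given by the Poincaré polynomial 1 + 2z + 2z² + z³. -/

import Mathlib

/-- The fermionic Fock space on `n` sites: the exterior algebra `Λ[c₁†,…,c_n†]`,
realized as functions on occupation configurations. -/
abbrev FockSpace (n : ℕ) := (Fin n → Bool) → ℚ

/-- The Jordan–Wigner sign `(-1)^{#{j < i : s j occupied}}`. -/
noncomputable def jwSign {n : ℕ} (s : Fin n → Bool) (i : Fin n) : ℚ :=
  (-1 : ℚ) ^ (Finset.univ.filter (fun j : Fin n => j < i ∧ s j = true)).card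

/-- The creation operator `c_i†` (left multiplication by `c_i†`). -/
noncomputable def cr {n : ℕ} (i : Fin n) : FockSpace n →ₗ[ℚ] FockSpace n where
  toFun f s := if s i = true then jwSign s i * f (Function.update s i false) else 0
  map_add' f g := by
    funext s; by_cases h : s i = true <;> simp [h, mul_add]
  map_smul' a f := by
    funext s; by_cases h : s i = true <;> simp [h] <;> ring

/-- The annihilation operator `c_i` (the odd derivation dual to `c_i†`),
satisfying `{c_i, c_j†} = δ_{ij}`. -/
noncomputable def an {n : ℕ} (i : Fin n) : FockSpace n →ₗ[ℚ] FockSpace n where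
  toFun f s := if s i = false then jwSign s i * f (Function.update s i true) else 0
  map_add' f g := by
    funext s; by_cases h : s i = false <;> simp [h, mul_add]
  map_smul' a f := by
    funext s; by_cases h : s i = false <;> simp [h] <;> ring

/-- The fermion-number-`k` graded piece of the Fock space: states supported on
configurations with exactly `k` occupied sites. -/
def degSub (n k : ℕ) : Submodule ℚ (FockSpace n) where
  carrier := {f | ∀ s, (Finset.univ.filter (fun j => s j = true)).card ≠ k → f s = 0}
  add_mem' := by
    intro f g hf hg s hs
    simp [Pi.add_apply, hf s hs, hg s hs]
  zero_mem' := by intro s _; rfl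
  smul_mem' := by
    intro a f hf s hs
    simp [Pi.smul_apply, hf s hs]


open Module Submodule

noncomputable def ee (t : Fin 3 → Bool) : FockSpace 3 := Pi.single t 1

noncomputable def QQ : FockSpace 3 →ₗ[ℚ] FockSpace 3 :=
  an (0 : Fin 3) ∘ₗ cr (1 : Fin 3) ∘ₗ an (2 : Fin 3)

def sA : Fin 3 → Bool := ![false, true, false]
def sB : Fin 3 → Bool := ![true, false, true]

lemma Qapp (f : FockSpace 3) (a b c : Bool) :
    QQ f ![a,b,c] = if a = false ∧ b = true ∧ c = false then f sB else 0 := by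
  cases a <;> cases b <;> cases c
  case false.true.false =>
    simp [QQ, an, cr, jwSign, Function.update, Fin.lt_def]
    rw [show (Finset.filter (fun j : Fin 3 => j = 0 ∧ (j = 0 ∨ ![false,true,false] j = true))
        Finset.univ).card = 1 from by decide]
    rw [show (Finset.filter (fun j : Fin 3 => (j:ℕ) ≤ 1 ∧ ¬j = 1 ∧ (j = 0 ∨ ![false,true,false] j = true))
        Finset.univ).card = 1 from by decide]
    rw [show Function.update (Function.update (Function.update ![false,true,false] 0 true)
        1 false) 2 true = sB from by funext i; fin_cases i <;> rfl]
    ring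
  all_goals simp [QQ, an, cr, jwSign, Function.update, Fin.lt_def]

lemma ee_apply (t s : Fin 3 → Bool) : ee t s = if s = t then 1 else 0 := by
  simp [ee, Pi.single_apply]

lemma Qfun (f : FockSpace 3) : QQ f = f sB • ee sA := by
  funext s
  have hs : s = ![s 0, s 1, s 2] := by funext i; fin_cases i <;> rfl
  rw [hs, Qapp, Pi.smul_apply, ee_apply, smul_eq_mul]
  cases h0 : s 0 <;> cases h1 : s 1 <;> cases h2 : s 2 <;>
    simp (config := { decide := true }) [sA]

lemma mem_ker_iff (f : FockSpace 3) : f ∈ LinearMap.ker QQ ↔ f sB = 0 := by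
  rw [LinearMap.mem_ker]
  constructor
  · intro h
    have := congrFun h sA
    simpa [Qfun, ee_apply] using this
  · intro h; rw [Qfun, h, zero_smul]

lemma ee_li : LinearIndependent ℚ ee := by
  rw [Fintype.linearIndependent_iff]
  intro g hg t
  have := congrFun hg t
  simpa [Finset.sum_apply, ee_apply, Finset.sum_ite_eq] using this

lemma sum_repr (f : FockSpace 3) (S : Finset (Fin 3 → Bool)) (h : ∀ s ∉ S, f s = 0) :
    f ∈ span ℚ (ee '' S) := by
  have hf : f = ∑ t ∈ S, f t • ee t := by
    funext s
    rw [Finset.sum_apply]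
    by_cases hs : s ∈ S
    · rw [Finset.sum_eq_single s (fun t _ ht => by simp [ee_apply, Ne.symm ht])
        (fun hns => absurd hs hns)]
      simp [ee_apply]
    · rw [h s hs]
      refine (Finset.sum_eq_zero fun t ht => ?_).symm
      have : s ≠ t := fun he => hs (he ▸ ht)
      simp [ee_apply, this]
  rw [hf]
  exact sum_mem fun t ht => smul_mem _ _ (subset_span ⟨t, ht, rfl⟩)

lemma finrank_span_ee (S : Finset (Fin 3 → Bool)) :
    finrank ℚ (span ℚ (ee '' (S : Set (Fin 3 → Bool)))) = S.card := by
  have h1 : (ee '' (S : Set (Fin 3 → Bool))) = Set.range (ee ∘ (Subtype.val : S → _)) := by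
    rw [Set.range_comp, Subtype.range_val]
  rw [h1, finrank_span_eq_card (ee_li.comp _ Subtype.val_injective), Fintype.card_coe]

def wt (s : Fin 3 → Bool) : ℕ := (Finset.univ.filter (fun j => s j = true)).card

lemma mem_degSub_iff (k : ℕ) (f : FockSpace 3) :
    f ∈ degSub 3 k ↔ ∀ s, wt s ≠ k → f s = 0 := Iff.rfl

lemma degSub_eq_span (k : ℕ) (S : Finset (Fin 3 → Bool))
    (hS : ∀ t : Fin 3 → Bool, wt t = k ↔ t ∈ S) :
    degSub 3 k = span ℚ (ee '' S) := by
  apply le_antisymm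
  · intro f hf
    exact sum_repr f S (fun s hs => hf s (fun hw => hs ((hS s).mp hw)))
  · rw [span_le]
    rintro x ⟨t, ht, rfl⟩
    intro s hsw
    have hst : s ≠ t := fun he => hsw (he ▸ ((hS t).mpr ht))
    simp [ee_apply, hst]

lemma deg0 : degSub 3 0 = span ℚ (ee '' ({![false,false,false]} : Finset (Fin 3 → Bool))) :=
  degSub_eq_span 0 _ (by decide)

lemma deg1 : degSub 3 1 = span ℚ (ee ''
    ({![true,false,false], ![false,true,false], ![false,false,true]} : Finset (Fin 3 → Bool))) :=
  degSub_eq_span 1 _ (by decide)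

lemma deg2 : degSub 3 2 = span ℚ (ee ''
    ({![true,true,false], ![true,false,true], ![false,true,true]} : Finset (Fin 3 → Bool))) :=
  degSub_eq_span 2 _ (by decide)

lemma deg3 : degSub 3 3 = span ℚ (ee '' ({![true,true,true]} : Finset (Fin 3 → Bool))) :=
  degSub_eq_span 3 _ (by decide)

lemma deg_hi (k : ℕ) (hk : 4 ≤ k) : degSub 3 k = ⊥ := by
  rw [eq_bot_iff]
  intro f hf
  have : ∀ s, f s = 0 := fun s => hf s (by
    have := Finset.card_filter_le (Finset.univ : Finset (Fin 3)) (fun j => s j = true)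
    simp at this; omega)
  exact funext this

lemma wt_sB : (Finset.filter (fun j => sB j = true) Finset.univ).card = 2 := by decide

lemma deg_le_ker (j : ℕ) (hj : j ≠ 2) : degSub 3 j ≤ LinearMap.ker QQ := by
  intro f hf
  rw [mem_ker_iff]
  exact hf sB (by rw [wt_sB]; omega)

lemma range_QQ : LinearMap.range QQ = span ℚ (ee '' ({sA} : Finset (Fin 3 → Bool))) := by
  apply le_antisymm
  · rintro x ⟨f, rfl⟩
    rw [Qfun]
    exact smul_mem _ _ (subset_span ⟨sA, by simp, rfl⟩)
  · rw [span_le]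
    rintro x ⟨t, ht, rfl⟩
    simp only [Finset.coe_singleton, Set.mem_singleton_iff] at ht
    subst ht
    exact ⟨ee sB, by rw [Qfun, ee_apply]; simp⟩

lemma map_deg2 : Submodule.map QQ (degSub 3 2) = span ℚ (ee '' ({sA} : Finset (Fin 3 → Bool))) := by
  apply le_antisymm
  · rintro x ⟨f, _, rfl⟩
    rw [Qfun]
    exact smul_mem _ _ (subset_span ⟨sA, by simp, rfl⟩)
  · rw [span_le]
    rintro x ⟨t, ht, rfl⟩
    simp only [Finset.coe_singleton, Set.mem_singleton_iff] at ht
    subst ht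
    refine ⟨ee sB, ?_, by rw [Qfun, ee_apply]; simp⟩
    intro s hs
    have hst : s ≠ sB := fun he => hs (by rw [he, wt_sB])
    simp [ee_apply, hst]

lemma map_deg_ne2 (j : ℕ) (hj : j ≠ 2) : Submodule.map QQ (degSub 3 j) = ⊥ := by
  rw [eq_bot_iff]
  rintro x ⟨f, hf, rfl⟩
  have := deg_le_ker j hj hf
  rw [LinearMap.mem_ker] at this
  simp [this]

lemma key2 : ∀ u ∈ ({![true,true,false], ![false,true,true]} : Finset (Fin 3 → Bool)),
    sB ≠ u ∧ (Finset.filter (fun j => u j = true) Finset.univ).card = 2 := by decide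

lemma wt2_cases : ∀ s : Fin 3 → Bool,
    (Finset.filter (fun j => s j = true) Finset.univ).card = 2 →
    s ∉ ({![true,true,false], ![false,true,true]} : Finset (Fin 3 → Bool)) → s = sB := by decide

lemma ker_inf_deg2 : LinearMap.ker QQ ⊓ degSub 3 2 = span ℚ (ee ''
    ({![true,true,false], ![false,true,true]} : Finset (Fin 3 → Bool))) := by
  apply le_antisymm
  · rintro f ⟨hk, hd⟩
    refine sum_repr f _ (fun s hs => ?_)
    by_cases hw : (Finset.filter (fun j => s j = true) Finset.univ).card = 2
    · rw [wt2_cases s hw hs]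
      exact (mem_ker_iff f).mp hk
    · exact hd s hw
  · rw [span_le]
    rintro x ⟨t, ht, rfl⟩
    have ht' : t ∈ ({![true,true,false], ![false,true,true]} : Finset (Fin 3 → Bool)) := ht
    rw [SetLike.mem_coe, Submodule.mem_inf]
    constructor
    · rw [mem_ker_iff, ee_apply]
      simp [(key2 t ht').1]
    · intro s hsw
      have hst : s ≠ t := fun he => hsw (he ▸ (key2 t ht').2)
      simp [ee_apply, hst]

lemma finrank_fock : finrank ℚ (FockSpace 3) = 8 := by
  rw [Module.finrank_fintype_fun_eq_card]
  decide

theorem nicolai_three_sites_homology' :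
    finrank ℚ (LinearMap.ker QQ) - finrank ℚ (LinearMap.range QQ) = 6 ∧
    (∀ i : ℕ,
      finrank ℚ ↥(LinearMap.ker QQ ⊓ degSub 3 i) -
        finrank ℚ ↥(Submodule.map QQ (degSub 3 (i+1))) =
      if i = 0 then 1 else if i = 1 then 2 else if i = 2 then 2 else
        if i = 3 then 1 else 0) := by
  have hrange : finrank ℚ (LinearMap.range QQ) = 1 := by
    rw [range_QQ, finrank_span_ee]; rfl
  have hker : finrank ℚ (LinearMap.ker QQ) = 7 := by
    have := LinearMap.finrank_range_add_finrank_ker QQ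
    rw [finrank_fock, hrange] at this
    omega
  constructor
  · rw [hker, hrange]
  · intro i
    match i with
    | 0 =>
      rw [inf_eq_right.mpr (deg_le_ker 0 (by norm_num)), deg0, finrank_span_ee,
        map_deg_ne2 1 (by norm_num), finrank_bot]
      decide
    | 1 =>
      rw [inf_eq_right.mpr (deg_le_ker 1 (by norm_num)), deg1, finrank_span_ee,
        map_deg2, finrank_span_ee]
      decide
    | 2 =>
      rw [ker_inf_deg2, finrank_span_ee, map_deg_ne2 3 (by norm_num), finrank_bot]
      decide
    | 3 =>
      rw [inf_eq_right.mpr (deg_le_ker 3 (by norm_num)), deg3, finrank_span_ee,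
        map_deg_ne2 4 (by norm_num), finrank_bot]
      decide
    | (n+4) =>
      rw [deg_hi (n+4) (by omega), inf_bot_eq, map_deg_ne2 (n+5) (by omega), finrank_bot]
      simp

/-- for `Q = c₁ c₂† c₃` on `Λ[c₁†, c₂†, c₃†]`, the homology
`ker Q / im Q` has total dimension `6`, with graded dimensions
`dim H_i = 1, 2, 2, 1` for `i = 0, 1, 2, 3`, i.e. Poincaré polynomial
`1 + 2z + 2z² + z³`. Here `H_i = (ker Q ∩ Λ_i) / Q(Λ_{i+1})` since `Q` has
fermion-number degree `-1`. -/
theorem nicolai_three_sites_homology :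
    letI Q : FockSpace 3 →ₗ[ℚ] FockSpace 3 :=
      an (0 : Fin 3) ∘ₗ cr (1 : Fin 3) ∘ₗ an (2 : Fin 3)
    Module.finrank ℚ (LinearMap.ker Q) - Module.finrank ℚ (LinearMap.range Q) = 6 ∧
    (∀ i : ℕ,
      Module.finrank ℚ ↥(LinearMap.ker Q ⊓ degSub 3 i) -
        Module.finrank ℚ ↥(Submodule.map Q (degSub 3 (i+1))) =
      if i = 0 then 1 else if i = 1 then 2 else if i = 2 then 2 else
        if i = 3 then 1 else 0) :=
  nicolai_three_sites_homology'
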